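/- arXiv:2506.21904 — 4 statements merged into one kernel-verified Lean document; each statement's English description precedes it below -/
import Mathlib

section
/- In U(sl2) ⊗ U(sl2), the commutator [h⊗e - e⊗h, h⊗f - f⊗h] equals 2·(h⊗1 + 1⊗h)·Ω, where Ω = (1/2)h⊗h + e⊗f + f⊗e. -/
open UniversalEnvelopingAlgebra TensorProduct

/-- In `U(sl₂) ⊗ U(sl₂)`, the commutator `[h⊗e - e⊗h, h⊗f - f⊗h]` equals
`2·(h⊗1 + 1⊗h)·Ω`, where `Ω = (1/2)h⊗h + e⊗f + f⊗e` is the Casimir tensor. -/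
theorem stmt1 {L : Type} [LieRing L] [LieAlgebra ℂ L] (e f h : L)
    (he : ⁅h, e⁆ = (2 : ℂ) • e) (hf : ⁅h, f⁆ = (-2 : ℂ) • f) (hef : ⁅e, f⁆ = h)
    (hspan : Submodule.span ℂ {e, f, h} = ⊤) :
    letI E := ι ℂ (L := L) e
    letI F := ι ℂ (L := L) f
    letI H := ι ℂ (L := L) h
    letI Ω : UniversalEnvelopingAlgebra ℂ L ⊗[ℂ] UniversalEnvelopingAlgebra ℂ L :=
      (1/2 : ℂ) • (H ⊗ₜ H) + E ⊗ₜ F + F ⊗ₜ E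
    ⁅H ⊗ₜ[ℂ] E - E ⊗ₜ[ℂ] H, H ⊗ₜ[ℂ] F - F ⊗ₜ[ℂ] H⁆
      = (2 : ℂ) • ((H ⊗ₜ[ℂ] (1 : UniversalEnvelopingAlgebra ℂ L)
          + (1 : UniversalEnvelopingAlgebra ℂ L) ⊗ₜ[ℂ] H) * Ω) := by
  set E := ι ℂ (L := L) e
  set F := ι ℂ (L := L) f
  set H := ι ℂ (L := L) h
  letI : LieRing (UniversalEnvelopingAlgebra ℂ L) := LieRing.ofAssociativeRing
  have t1 : H * E - E * H = (2 : ℂ) • E := by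
    rw [← Ring.lie_def, ← (ι ℂ : L →ₗ⁅ℂ⁆ UniversalEnvelopingAlgebra ℂ L).map_lie, he, map_smul]
  have t2 : H * F - F * H = (-2 : ℂ) • F := by
    rw [← Ring.lie_def, ← (ι ℂ : L →ₗ⁅ℂ⁆ UniversalEnvelopingAlgebra ℂ L).map_lie, hf, map_smul]
  have t3 : E * F - F * E = H := by
    rw [← Ring.lie_def, ← (ι ℂ : L →ₗ⁅ℂ⁆ UniversalEnvelopingAlgebra ℂ L).map_lie, hef]
  have h1 : H * E = E * H + (2 : ℂ) • E := by rw [← t1]; abel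
  have h2 : H * F = F * H + (-2 : ℂ) • F := by rw [← t2]; abel
  have h3 : E * F = F * E + H := by rw [← t3]; abel
  show _ = _
  rw [Ring.lie_def]
  simp only [mul_sub, sub_mul, mul_add, add_mul, smul_mul_assoc, mul_smul_comm,
    Algebra.TensorProduct.tmul_mul_tmul, one_mul, mul_one]
  simp only [h1, h2, h3]
  simp only [TensorProduct.tmul_add, TensorProduct.add_tmul, ← TensorProduct.smul_tmul',
    TensorProduct.tmul_smul, smul_add, smul_smul]
  module
end

section
/- Define δ: g[u] → g[u] ⊗ g[u] by δ(x⊗uⁿ) = Σ_{a+b=n−1} [x⊗1, Ω]·(u^a ⊗ u^b), where Ω ∈ g⊗g is the Casimir tensor of a nondegenerate invariant symmetric bilinear form on a simple Lie algebra g, and [x⊗1, Ω] is taken in U(g)⊗U(g) (landing in g⊗g). Then δ satisfies the co-Jacobi identity: (Id + σ + σ²) ∘ (δ ⊗ Id) ∘ δ = 0, where σ is the cyclic permutation of tensor factors on g[u]^⊗3. -/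
open TensorProduct

section aux
variable {g : Type} [LieRing g] [LieAlgebra ℂ g]

/-- context map `a ⊗ b ↦ a ⊗ (b ⊗ c)` -/
noncomputable def ctxR (c : g) : (g ⊗[ℂ] g) →ₗ[ℂ] g ⊗[ℂ] (g ⊗[ℂ] g) :=
  (TensorProduct.assoc ℂ g g g).toLinearMap ∘ₗ ((TensorProduct.mk ℂ (g ⊗[ℂ] g) g).flip c)

@[simp] lemma ctxR_tmul (c a b : g) : ctxR c (a ⊗ₜ[ℂ] b) = a ⊗ₜ[ℂ] (b ⊗ₜ[ℂ] c) := by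
  simp [ctxR]

/-- context map `a ⊗ b ↦ c ⊗ (a ⊗ b)` -/
noncomputable def ctxL (c : g) : (g ⊗[ℂ] g) →ₗ[ℂ] g ⊗[ℂ] (g ⊗[ℂ] g) :=
  TensorProduct.mk ℂ g (g ⊗[ℂ] g) c

@[simp] lemma ctxL_tmul (c a b : g) : ctxL c (a ⊗ₜ[ℂ] b) = c ⊗ₜ[ℂ] (a ⊗ₜ[ℂ] b) := rfl

/-- context map `a ⊗ b ↦ a ⊗ (⁅b,c⁆ ⊗ d)` -/
noncomputable def ctxB (c d : g) : (g ⊗[ℂ] g) →ₗ[ℂ] g ⊗[ℂ] (g ⊗[ℂ] g) :=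
  TensorProduct.map LinearMap.id
    (((TensorProduct.mk ℂ g g).flip d) ∘ₗ (-((LieAlgebra.ad ℂ g c) : g →ₗ[ℂ] g)))

@[simp] lemma ctxB_tmul (c d a b : g) :
    ctxB c d (a ⊗ₜ[ℂ] b) = a ⊗ₜ[ℂ] (⁅b, c⁆ ⊗ₜ[ℂ] d) := by
  simp only [ctxB, TensorProduct.map_tmul, LinearMap.id_coe, id_eq, LinearMap.comp_apply,
    LinearMap.neg_apply, LieAlgebra.ad_apply, LinearMap.flip_apply, TensorProduct.mk_apply]
  rw [lie_skew b c]

/-- context map `a ⊗ b ↦ c ⊗ (a ⊗ ⁅b,d⁆)` -/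
noncomputable def ctxC (c d : g) : (g ⊗[ℂ] g) →ₗ[ℂ] g ⊗[ℂ] (g ⊗[ℂ] g) :=
  (TensorProduct.mk ℂ g (g ⊗[ℂ] g) c) ∘ₗ
    TensorProduct.map LinearMap.id (-((LieAlgebra.ad ℂ g d) : g →ₗ[ℂ] g))

@[simp] lemma ctxC_tmul (c d a b : g) :
    ctxC c d (a ⊗ₜ[ℂ] b) = c ⊗ₜ[ℂ] (a ⊗ₜ[ℂ] ⁅b, d⁆) := by
  simp only [ctxC, TensorProduct.map_tmul, LinearMap.id_coe, id_eq, LinearMap.comp_apply,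
    LinearMap.neg_apply, LieAlgebra.ad_apply, TensorProduct.mk_apply]
  rw [lie_skew b d]

/-- context map `a ⊗ b ↦ a ⊗ (c ⊗ ⁅w,b⁆)` -/
noncomputable def ctxM (c w : g) : (g ⊗[ℂ] g) →ₗ[ℂ] g ⊗[ℂ] (g ⊗[ℂ] g) :=
  TensorProduct.map LinearMap.id
    ((TensorProduct.mk ℂ g g c) ∘ₗ ((LieAlgebra.ad ℂ g w) : g →ₗ[ℂ] g))

@[simp] lemma ctxM_tmul (c w a b : g) :
    ctxM c w (a ⊗ₜ[ℂ] b) = a ⊗ₜ[ℂ] (c ⊗ₜ[ℂ] ⁅w, b⁆) := by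
  simp [ctxM, LieAlgebra.ad_apply]

lemma ctx_step {ι : Type*} {W : Type*} [AddCommGroup W] [Module ℂ W]
    (s : Finset ι) (F : (g ⊗[ℂ] g) →ₗ[ℂ] W) {u v u' v' : ι → g}
    (h : ∑ i ∈ s, u i ⊗ₜ[ℂ] v i = ∑ i ∈ s, u' i ⊗ₜ[ℂ] v' i) :
    ∑ i ∈ s, F (u i ⊗ₜ[ℂ] v i) = ∑ i ∈ s, F (u' i ⊗ₜ[ℂ] v' i) := by
  rw [← map_sum, ← map_sum, h]

end aux

section core
variable {g : Type} [LieRing g] [LieAlgebra ℂ g]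

theorem coreB (S : Finset (g × g)) (x : g)
    (hinvS : ∀ w : g, ∑ p ∈ S, ⁅w, p.1⁆ ⊗ₜ[ℂ] p.2 = ∑ p ∈ S, p.1 ⊗ₜ[ℂ] (-⁅w, p.2⁆))
    (hsymS : ∑ p ∈ S, p.2 ⊗ₜ[ℂ] p.1 = ∑ p ∈ S, p.1 ⊗ₜ[ℂ] p.2) :
    (∑ p ∈ S, ∑ q ∈ S, ⁅⁅x, p.1⁆, q.1⁆ ⊗ₜ[ℂ] (q.2 ⊗ₜ[ℂ] p.2))
      + (∑ p ∈ S, ∑ q ∈ S, p.2 ⊗ₜ[ℂ] (⁅⁅x, p.1⁆, q.1⁆ ⊗ₜ[ℂ] q.2))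
      + (∑ p ∈ S, ∑ q ∈ S, q.2 ⊗ₜ[ℂ] (p.2 ⊗ₜ[ℂ] ⁅⁅x, p.1⁆, q.1⁆)) = 0 := by
  have K2 : ∀ w : g, ∑ p ∈ S, p.1 ⊗ₜ[ℂ] ⁅w, p.2⁆ = ∑ p ∈ S, p.2 ⊗ₜ[ℂ] ⁅w, p.1⁆ := by
    intro w
    have h := congrArg
      (TensorProduct.map (LinearMap.id : g →ₗ[ℂ] g) ((LieAlgebra.ad ℂ g w) : g →ₗ[ℂ] g))
      hsymS.symm
    simpa [map_sum, LieAlgebra.ad_apply] using h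
  have K3 : ∀ y w : g, ∑ p ∈ S, ⁅y, ⁅w, p.1⁆⁆ ⊗ₜ[ℂ] p.2
      = ∑ p ∈ S, p.1 ⊗ₜ[ℂ] ⁅w, ⁅y, p.2⁆⁆ := by
    intro y w
    have A : ∑ p ∈ S, ⁅y, ⁅w, p.1⁆⁆ ⊗ₜ[ℂ] p.2
        = ∑ p ∈ S, ⁅y, p.1⁆ ⊗ₜ[ℂ] (-⁅w, p.2⁆) := by
      have h := congrArg
        (TensorProduct.map ((LieAlgebra.ad ℂ g y) : g →ₗ[ℂ] g) (LinearMap.id : g →ₗ[ℂ] g))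
        (hinvS w)
      simpa [map_sum, LieAlgebra.ad_apply] using h
    have B : ∑ p ∈ S, ⁅y, p.1⁆ ⊗ₜ[ℂ] ⁅w, p.2⁆
        = ∑ p ∈ S, p.1 ⊗ₜ[ℂ] (-⁅w, ⁅y, p.2⁆⁆) := by
      have h := congrArg
        (TensorProduct.map (LinearMap.id : g →ₗ[ℂ] g) ((LieAlgebra.ad ℂ g w) : g →ₗ[ℂ] g))
        (hinvS y)
      simp only [map_sum, TensorProduct.map_tmul, LinearMap.id_coe, id_eq,
        LieAlgebra.ad_apply, lie_neg] at h
      exact h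
    calc ∑ p ∈ S, ⁅y, ⁅w, p.1⁆⁆ ⊗ₜ[ℂ] p.2
        = ∑ p ∈ S, ⁅y, p.1⁆ ⊗ₜ[ℂ] (-⁅w, p.2⁆) := A
      _ = -∑ p ∈ S, ⁅y, p.1⁆ ⊗ₜ[ℂ] ⁅w, p.2⁆ := by
          simp only [tmul_neg, Finset.sum_neg_distrib]
      _ = -∑ p ∈ S, p.1 ⊗ₜ[ℂ] (-⁅w, ⁅y, p.2⁆⁆) := by rw [B]
      _ = ∑ p ∈ S, p.1 ⊗ₜ[ℂ] ⁅w, ⁅y, p.2⁆⁆ := by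
          simp only [tmul_neg, Finset.sum_neg_distrib, neg_neg]
  have h1 : (∑ p ∈ S, ∑ q ∈ S, ⁅⁅x, p.1⁆, q.1⁆ ⊗ₜ[ℂ] (q.2 ⊗ₜ[ℂ] p.2))
      = ∑ p ∈ S, ∑ q ∈ S, p.1 ⊗ₜ[ℂ] (q.1 ⊗ₜ[ℂ] ⁅x, ⁅p.2, q.2⁆⁆) := by
    calc (∑ p ∈ S, ∑ q ∈ S, ⁅⁅x, p.1⁆, q.1⁆ ⊗ₜ[ℂ] (q.2 ⊗ₜ[ℂ] p.2))
        = ∑ p ∈ S, ∑ q ∈ S, ctxR p.2 (⁅⁅x, p.1⁆, q.1⁆ ⊗ₜ[ℂ] q.2) := by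
          simp only [ctxR_tmul]
      _ = ∑ p ∈ S, ∑ q ∈ S, ctxR p.2 (q.1 ⊗ₜ[ℂ] (-⁅⁅x, p.1⁆, q.2⁆)) :=
          Finset.sum_congr rfl fun p _ => ctx_step S (ctxR p.2) (hinvS ⁅x, p.1⁆)
      _ = ∑ q ∈ S, ∑ p ∈ S, ctxR p.2 (q.1 ⊗ₜ[ℂ] (-⁅⁅x, p.1⁆, q.2⁆)) := Finset.sum_comm
      _ = ∑ q ∈ S, ∑ p ∈ S, ctxL q.1 (⁅q.2, ⁅x, p.1⁆⁆ ⊗ₜ[ℂ] p.2) := by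
          simp only [ctxR_tmul, ctxL_tmul, lie_skew]
      _ = ∑ q ∈ S, ∑ p ∈ S, ctxL q.1 (p.1 ⊗ₜ[ℂ] ⁅x, ⁅q.2, p.2⁆⁆) :=
          Finset.sum_congr rfl fun q _ => ctx_step S (ctxL q.1) (K3 q.2 x)
      _ = ∑ p ∈ S, ∑ q ∈ S, p.1 ⊗ₜ[ℂ] (q.1 ⊗ₜ[ℂ] ⁅x, ⁅p.2, q.2⁆⁆) := by
          simp only [ctxL_tmul]
  have h2 : (∑ p ∈ S, ∑ q ∈ S, p.2 ⊗ₜ[ℂ] (⁅⁅x, p.1⁆, q.1⁆ ⊗ₜ[ℂ] q.2))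
      = ∑ p ∈ S, ∑ q ∈ S, p.1 ⊗ₜ[ℂ] (q.1 ⊗ₜ[ℂ] (-⁅⁅x, p.2⁆, q.2⁆)) := by
    calc (∑ p ∈ S, ∑ q ∈ S, p.2 ⊗ₜ[ℂ] (⁅⁅x, p.1⁆, q.1⁆ ⊗ₜ[ℂ] q.2))
        = ∑ q ∈ S, ∑ p ∈ S, ctxB q.1 q.2 (p.2 ⊗ₜ[ℂ] ⁅x, p.1⁆) := by
          rw [Finset.sum_comm]
          simp only [ctxB_tmul]
      _ = ∑ q ∈ S, ∑ p ∈ S, ctxB q.1 q.2 (p.1 ⊗ₜ[ℂ] ⁅x, p.2⁆) :=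
          Finset.sum_congr rfl fun q _ => ctx_step S (ctxB q.1 q.2) (K2 x).symm
      _ = ∑ p ∈ S, ∑ q ∈ S, ctxL p.1 (⁅⁅x, p.2⁆, q.1⁆ ⊗ₜ[ℂ] q.2) := by
          rw [Finset.sum_comm]
          simp only [ctxB_tmul, ctxL_tmul]
      _ = ∑ p ∈ S, ∑ q ∈ S, ctxL p.1 (q.1 ⊗ₜ[ℂ] (-⁅⁅x, p.2⁆, q.2⁆)) :=
          Finset.sum_congr rfl fun p _ => ctx_step S (ctxL p.1) (hinvS ⁅x, p.2⁆)
      _ = ∑ p ∈ S, ∑ q ∈ S, p.1 ⊗ₜ[ℂ] (q.1 ⊗ₜ[ℂ] (-⁅⁅x, p.2⁆, q.2⁆)) := by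
          simp only [ctxL_tmul]
  have h3 : (∑ p ∈ S, ∑ q ∈ S, q.2 ⊗ₜ[ℂ] (p.2 ⊗ₜ[ℂ] ⁅⁅x, p.1⁆, q.1⁆))
      = ∑ p ∈ S, ∑ q ∈ S, p.1 ⊗ₜ[ℂ] (q.1 ⊗ₜ[ℂ] ⁅⁅x, q.2⁆, p.2⁆) := by
    calc (∑ p ∈ S, ∑ q ∈ S, q.2 ⊗ₜ[ℂ] (p.2 ⊗ₜ[ℂ] ⁅⁅x, p.1⁆, q.1⁆))
        = ∑ q ∈ S, ∑ p ∈ S, ctxC q.2 q.1 (p.2 ⊗ₜ[ℂ] ⁅x, p.1⁆) := by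
          rw [Finset.sum_comm]
          simp only [ctxC_tmul]
      _ = ∑ q ∈ S, ∑ p ∈ S, ctxC q.2 q.1 (p.1 ⊗ₜ[ℂ] ⁅x, p.2⁆) :=
          Finset.sum_congr rfl fun q _ => ctx_step S (ctxC q.2 q.1) (K2 x).symm
      _ = ∑ p ∈ S, ∑ q ∈ S, ctxM p.1 ⁅x, p.2⁆ (q.2 ⊗ₜ[ℂ] q.1) := by
          rw [Finset.sum_comm]
          simp only [ctxC_tmul, ctxM_tmul]
      _ = ∑ p ∈ S, ∑ q ∈ S, ctxM p.1 ⁅x, p.2⁆ (q.1 ⊗ₜ[ℂ] q.2) :=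
          Finset.sum_congr rfl fun p _ => ctx_step S (ctxM p.1 ⁅x, p.2⁆) hsymS
      _ = ∑ p ∈ S, ∑ q ∈ S, q.1 ⊗ₜ[ℂ] (p.1 ⊗ₜ[ℂ] ⁅⁅x, p.2⁆, q.2⁆) := by
          simp only [ctxM_tmul]
      _ = ∑ p ∈ S, ∑ q ∈ S, p.1 ⊗ₜ[ℂ] (q.1 ⊗ₜ[ℂ] ⁅⁅x, q.2⁆, p.2⁆) := Finset.sum_comm
  rw [h1, h2, h3, ← Finset.sum_add_distrib, ← Finset.sum_add_distrib]
  apply Finset.sum_eq_zero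
  intro p _
  rw [← Finset.sum_add_distrib, ← Finset.sum_add_distrib]
  apply Finset.sum_eq_zero
  intro q _
  have hy : ⁅x, ⁅p.2, q.2⁆⁆ + -⁅⁅x, p.2⁆, q.2⁆ + ⁅⁅x, q.2⁆, p.2⁆ = (0 : g) := by
    rw [leibniz_lie, ← lie_skew p.2 ⁅x, q.2⁆]
    abel
  rw [← TensorProduct.tmul_add, ← TensorProduct.tmul_add, ← TensorProduct.tmul_add,
    ← TensorProduct.tmul_add, hy, tmul_zero, tmul_zero]

end core

lemma cyc_sum {M : Type*} [AddCommMonoid M] (n : ℕ) (H : ℕ → ℕ → ℕ → M) :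
    ∑ a ∈ Finset.range n, ∑ c ∈ Finset.range a, H (n-1-a) c (a-1-c)
      = ∑ a ∈ Finset.range n, ∑ c ∈ Finset.range a, H c (a-1-c) (n-1-a) := by
  rw [Finset.sum_sigma', Finset.sum_sigma']
  refine Finset.sum_nbij' (i := fun x => ⟨n - x.1 + x.2, n - 1 - x.1⟩)
    (j := fun y => ⟨n - 1 - y.2, y.1 - 1 - y.2⟩) ?_ ?_ ?_ ?_ ?_
  · rintro ⟨a, c⟩ hx
    simp only [Finset.mem_sigma, Finset.mem_range] at hx ⊢
    omega
  · rintro ⟨a, c⟩ hx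
    simp only [Finset.mem_sigma, Finset.mem_range] at hx ⊢
    omega
  · rintro ⟨a, c⟩ hx
    simp only [Finset.mem_sigma, Finset.mem_range] at hx
    simp only [Sigma.mk.inj_iff, heq_eq_eq]
    omega
  · rintro ⟨a, c⟩ hx
    simp only [Finset.mem_sigma, Finset.mem_range] at hx
    simp only [Sigma.mk.inj_iff, heq_eq_eq]
    omega
  · rintro ⟨a, c⟩ hx
    simp only [Finset.mem_sigma, Finset.mem_range] at hx
    have e1 : n - 1 - (n - a + c) = a - 1 - c := by omega
    have e2 : (n - a + c) - 1 - (n - 1 - a) = c := by omega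
    simp only [e1, e2]

section embsec
variable {g : Type} [LieRing g] [LieAlgebra ℂ g]

noncomputable def emb (u v w : ℕ) :
    (g ⊗[ℂ] (g ⊗[ℂ] g)) →ₗ[ℂ]
      ((Polynomial ℂ ⊗[ℂ] g) ⊗[ℂ] ((Polynomial ℂ ⊗[ℂ] g) ⊗[ℂ] (Polynomial ℂ ⊗[ℂ] g))) :=
  TensorProduct.map (TensorProduct.mk ℂ (Polynomial ℂ) g ((Polynomial.X : Polynomial ℂ) ^ u))
    (TensorProduct.map (TensorProduct.mk ℂ (Polynomial ℂ) g ((Polynomial.X : Polynomial ℂ) ^ v))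
      (TensorProduct.mk ℂ (Polynomial ℂ) g ((Polynomial.X : Polynomial ℂ) ^ w)))

@[simp] lemma emb_tmul (u v w : ℕ) (a b c : g) :
    emb u v w (a ⊗ₜ[ℂ] (b ⊗ₜ[ℂ] c))
      = (((Polynomial.X : Polynomial ℂ) ^ u) ⊗ₜ[ℂ] a) ⊗ₜ[ℂ]
          ((((Polynomial.X : Polynomial ℂ) ^ v) ⊗ₜ[ℂ] b) ⊗ₜ[ℂ]
            (((Polynomial.X : Polynomial ℂ) ^ w) ⊗ₜ[ℂ] c)) := by
  simp [emb]

end embsec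

/-- Let `g` be a finite-dimensional simple Lie algebra over `ℂ` with invariant symmetric
Casimir tensor `Ω ∈ g ⊗ g`, and define `δ : g[u] → g[u] ⊗ g[u]` by
`δ(uⁿ ⊗ x) = Σ_{a+b=n−1} [x⊗1, Ω]·(uᵃ ⊗ uᵇ)` (where `[x⊗1, Ω] = (ad x ⊗ id)(Ω) ∈ g⊗g`).
Then `δ` satisfies the co-Jacobi identity `(Id + σ + σ²) ∘ (δ ⊗ Id) ∘ δ = 0`, where `σ`
is the cyclic permutation of the three tensor factors. -/
theorem stmt11 {g : Type} [LieRing g] [LieAlgebra ℂ g] [LieAlgebra.IsSimple ℂ g]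
    [FiniteDimensional ℂ g]
    (Ω : g ⊗[ℂ] g)
    (hinv : ∀ x : g,
      TensorProduct.map (LieAlgebra.ad ℂ g x) LinearMap.id Ω
        + TensorProduct.map LinearMap.id (LieAlgebra.ad ℂ g x) Ω = 0)
    (hsym : TensorProduct.comm ℂ g g Ω = Ω)
    (δ : (Polynomial ℂ ⊗[ℂ] g) →ₗ[ℂ] (Polynomial ℂ ⊗[ℂ] g) ⊗[ℂ] (Polynomial ℂ ⊗[ℂ] g))
    (hδ : ∀ (n : ℕ) (x : g),
      δ ((Polynomial.X ^ n : Polynomial ℂ) ⊗ₜ[ℂ] x)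
        = ∑ a ∈ Finset.range n,
            (TensorProduct.map
              (TensorProduct.mk ℂ (Polynomial ℂ) g ((Polynomial.X : Polynomial ℂ) ^ a))
              (TensorProduct.mk ℂ (Polynomial ℂ) g ((Polynomial.X : Polynomial ℂ) ^ (n - 1 - a))))
              ((TensorProduct.map (LieAlgebra.ad ℂ g x) LinearMap.id) Ω))
    (σ : ((Polynomial ℂ ⊗[ℂ] g) ⊗[ℂ] ((Polynomial ℂ ⊗[ℂ] g) ⊗[ℂ] (Polynomial ℂ ⊗[ℂ] g)))
      →ₗ[ℂ] ((Polynomial ℂ ⊗[ℂ] g) ⊗[ℂ] ((Polynomial ℂ ⊗[ℂ] g) ⊗[ℂ] (Polynomial ℂ ⊗[ℂ] g))))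
    (hσ : ∀ a b c : Polynomial ℂ ⊗[ℂ] g, σ (a ⊗ₜ (b ⊗ₜ c)) = c ⊗ₜ (a ⊗ₜ b)) :
    (LinearMap.id + σ + σ ∘ₗ σ) ∘ₗ
      ((TensorProduct.assoc ℂ (Polynomial ℂ ⊗[ℂ] g) (Polynomial ℂ ⊗[ℂ] g)
          (Polynomial ℂ ⊗[ℂ] g)).toLinearMap ∘ₗ
        TensorProduct.map δ LinearMap.id) ∘ₗ δ = 0 := by
  classical
  obtain ⟨S, hS⟩ := TensorProduct.exists_finset Ω
  have hinvS : ∀ w : g, ∑ p ∈ S, ⁅w, p.1⁆ ⊗ₜ[ℂ] p.2 = ∑ p ∈ S, p.1 ⊗ₜ[ℂ] (-⁅w, p.2⁆) := by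
    intro w
    have h := hinv w
    rw [hS] at h
    simp only [map_sum, TensorProduct.map_tmul, LinearMap.id_coe, id_eq,
      LieAlgebra.ad_apply] at h
    have h2 := eq_neg_of_add_eq_zero_left h
    rw [h2]
    simp only [tmul_neg, Finset.sum_neg_distrib]
  have hsymS : ∑ p ∈ S, p.2 ⊗ₜ[ℂ] p.1 = ∑ p ∈ S, p.1 ⊗ₜ[ℂ] p.2 := by
    have h := hsym
    rw [hS] at h
    simp only [map_sum, TensorProduct.comm_tmul] at h
    exact h
  have KEY : ∀ (n : ℕ) (y : g),
      ((LinearMap.id + σ + σ ∘ₗ σ) ∘ₗ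
        ((TensorProduct.assoc ℂ (Polynomial ℂ ⊗[ℂ] g) (Polynomial ℂ ⊗[ℂ] g)
            (Polynomial ℂ ⊗[ℂ] g)).toLinearMap ∘ₗ
          TensorProduct.map δ LinearMap.id) ∘ₗ δ) ((Polynomial.X ^ n : Polynomial ℂ) ⊗ₜ[ℂ] y)
        = 0 := by
    intro n x
    simp only [LinearMap.comp_apply, LinearMap.add_apply, LinearMap.id_apply,
      LinearEquiv.coe_coe]
    have hA : (TensorProduct.assoc ℂ (Polynomial ℂ ⊗[ℂ] g) (Polynomial ℂ ⊗[ℂ] g)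
          (Polynomial ℂ ⊗[ℂ] g))
          ((TensorProduct.map δ LinearMap.id) (δ ((Polynomial.X ^ n : Polynomial ℂ) ⊗ₜ[ℂ] x)))
        = ∑ a ∈ Finset.range n, ∑ p ∈ S, ∑ c ∈ Finset.range a, ∑ q ∈ S,
            (((Polynomial.X : Polynomial ℂ) ^ c) ⊗ₜ[ℂ] ⁅⁅x, p.1⁆, q.1⁆) ⊗ₜ[ℂ]
              ((((Polynomial.X : Polynomial ℂ) ^ (a - 1 - c)) ⊗ₜ[ℂ] q.2) ⊗ₜ[ℂ]
                (((Polynomial.X : Polynomial ℂ) ^ (n - 1 - a)) ⊗ₜ[ℂ] p.2)) := by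
      rw [hδ n x]
      simp only [hS, map_sum, TensorProduct.map_tmul, TensorProduct.mk_apply,
        LinearMap.id_coe, id_eq, LieAlgebra.ad_apply, hδ, TensorProduct.sum_tmul,
        TensorProduct.assoc_tmul]
    have hA2 : (TensorProduct.assoc ℂ (Polynomial ℂ ⊗[ℂ] g) (Polynomial ℂ ⊗[ℂ] g)
          (Polynomial ℂ ⊗[ℂ] g))
          ((TensorProduct.map δ LinearMap.id) (δ ((Polynomial.X ^ n : Polynomial ℂ) ⊗ₜ[ℂ] x)))
        = ∑ a ∈ Finset.range n, ∑ c ∈ Finset.range a, ∑ p ∈ S, ∑ q ∈ S,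
            (((Polynomial.X : Polynomial ℂ) ^ c) ⊗ₜ[ℂ] ⁅⁅x, p.1⁆, q.1⁆) ⊗ₜ[ℂ] ((((Polynomial.X : Polynomial ℂ) ^ (a - 1 - c)) ⊗ₜ[ℂ] q.2) ⊗ₜ[ℂ] (((Polynomial.X : Polynomial ℂ) ^ (n - 1 - a)) ⊗ₜ[ℂ] p.2)) :=
      hA.trans (Finset.sum_congr rfl fun a _ => Finset.sum_comm)
    rw [hA2]
    simp only [map_sum, hσ]
    have e2 : (∑ a ∈ Finset.range n, ∑ c ∈ Finset.range a, ∑ p ∈ S, ∑ q ∈ S,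
            (((Polynomial.X : Polynomial ℂ) ^ (n - 1 - a)) ⊗ₜ[ℂ] p.2) ⊗ₜ[ℂ] ((((Polynomial.X : Polynomial ℂ) ^ c) ⊗ₜ[ℂ] ⁅⁅x, p.1⁆, q.1⁆) ⊗ₜ[ℂ] (((Polynomial.X : Polynomial ℂ) ^ (a - 1 - c)) ⊗ₜ[ℂ] q.2)))
        = ∑ a ∈ Finset.range n, ∑ c ∈ Finset.range a, ∑ p ∈ S, ∑ q ∈ S,
            (((Polynomial.X : Polynomial ℂ) ^ c) ⊗ₜ[ℂ] p.2) ⊗ₜ[ℂ] ((((Polynomial.X : Polynomial ℂ) ^ (a - 1 - c)) ⊗ₜ[ℂ] ⁅⁅x, p.1⁆, q.1⁆) ⊗ₜ[ℂ] (((Polynomial.X : Polynomial ℂ) ^ (n - 1 - a)) ⊗ₜ[ℂ] q.2)) :=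
      cyc_sum n (fun u v w => ∑ p ∈ S, ∑ q ∈ S,
            (((Polynomial.X : Polynomial ℂ) ^ u) ⊗ₜ[ℂ] p.2) ⊗ₜ[ℂ] ((((Polynomial.X : Polynomial ℂ) ^ v) ⊗ₜ[ℂ] ⁅⁅x, p.1⁆, q.1⁆) ⊗ₜ[ℂ] (((Polynomial.X : Polynomial ℂ) ^ w) ⊗ₜ[ℂ] q.2)))
    have e3 : (∑ a ∈ Finset.range n, ∑ c ∈ Finset.range a, ∑ p ∈ S, ∑ q ∈ S,
            (((Polynomial.X : Polynomial ℂ) ^ (a - 1 - c)) ⊗ₜ[ℂ] q.2) ⊗ₜ[ℂ] ((((Polynomial.X : Polynomial ℂ) ^ (n - 1 - a)) ⊗ₜ[ℂ] p.2) ⊗ₜ[ℂ] (((Polynomial.X : Polynomial ℂ) ^ c) ⊗ₜ[ℂ] ⁅⁅x, p.1⁆, q.1⁆)))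
        = ∑ a ∈ Finset.range n, ∑ c ∈ Finset.range a, ∑ p ∈ S, ∑ q ∈ S,
            (((Polynomial.X : Polynomial ℂ) ^ c) ⊗ₜ[ℂ] q.2) ⊗ₜ[ℂ] ((((Polynomial.X : Polynomial ℂ) ^ (a - 1 - c)) ⊗ₜ[ℂ] p.2) ⊗ₜ[ℂ] (((Polynomial.X : Polynomial ℂ) ^ (n - 1 - a)) ⊗ₜ[ℂ] ⁅⁅x, p.1⁆, q.1⁆)) :=
      (cyc_sum n (fun u v w => ∑ p ∈ S, ∑ q ∈ S,
            (((Polynomial.X : Polynomial ℂ) ^ v) ⊗ₜ[ℂ] q.2) ⊗ₜ[ℂ] ((((Polynomial.X : Polynomial ℂ) ^ w) ⊗ₜ[ℂ] p.2) ⊗ₜ[ℂ] (((Polynomial.X : Polynomial ℂ) ^ u) ⊗ₜ[ℂ] ⁅⁅x, p.1⁆, q.1⁆)))).symm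
    rw [e2, e3, ← Finset.sum_add_distrib, ← Finset.sum_add_distrib]
    refine Finset.sum_eq_zero fun a _ => ?_
    rw [← Finset.sum_add_distrib, ← Finset.sum_add_distrib]
    refine Finset.sum_eq_zero fun c _ => ?_
    have hcore := coreB S x hinvS hsymS
    have he : (∑ p ∈ S, ∑ q ∈ S,
            (((Polynomial.X : Polynomial ℂ) ^ c) ⊗ₜ[ℂ] ⁅⁅x, p.1⁆, q.1⁆) ⊗ₜ[ℂ] ((((Polynomial.X : Polynomial ℂ) ^ (a - 1 - c)) ⊗ₜ[ℂ] q.2) ⊗ₜ[ℂ] (((Polynomial.X : Polynomial ℂ) ^ (n - 1 - a)) ⊗ₜ[ℂ] p.2)))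
          + (∑ p ∈ S, ∑ q ∈ S,
            (((Polynomial.X : Polynomial ℂ) ^ c) ⊗ₜ[ℂ] p.2) ⊗ₜ[ℂ] ((((Polynomial.X : Polynomial ℂ) ^ (a - 1 - c)) ⊗ₜ[ℂ] ⁅⁅x, p.1⁆, q.1⁆) ⊗ₜ[ℂ] (((Polynomial.X : Polynomial ℂ) ^ (n - 1 - a)) ⊗ₜ[ℂ] q.2)))
          + (∑ p ∈ S, ∑ q ∈ S,
            (((Polynomial.X : Polynomial ℂ) ^ c) ⊗ₜ[ℂ] q.2) ⊗ₜ[ℂ] ((((Polynomial.X : Polynomial ℂ) ^ (a - 1 - c)) ⊗ₜ[ℂ] p.2) ⊗ₜ[ℂ] (((Polynomial.X : Polynomial ℂ) ^ (n - 1 - a)) ⊗ₜ[ℂ] ⁅⁅x, p.1⁆, q.1⁆)))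
        = emb c (a - 1 - c) (n - 1 - a)
            ((∑ p ∈ S, ∑ q ∈ S, ⁅⁅x, p.1⁆, q.1⁆ ⊗ₜ[ℂ] (q.2 ⊗ₜ[ℂ] p.2))
              + (∑ p ∈ S, ∑ q ∈ S, p.2 ⊗ₜ[ℂ] (⁅⁅x, p.1⁆, q.1⁆ ⊗ₜ[ℂ] q.2))
              + (∑ p ∈ S, ∑ q ∈ S, q.2 ⊗ₜ[ℂ] (p.2 ⊗ₜ[ℂ] ⁅⁅x, p.1⁆, q.1⁆))) := by
      simp only [map_add, map_sum, emb_tmul]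
    rw [he, hcore, map_zero]
  apply TensorProduct.ext'
  intro p x
  induction p using Polynomial.induction_on' with
  | add f h hf hh =>
      simp only [LinearMap.zero_apply] at hf hh ⊢
      rw [add_tmul, map_add, hf, hh, add_zero]
  | monomial m a =>
      have hm : ((Polynomial.monomial m a : Polynomial ℂ)) ⊗ₜ[ℂ] x
          = a • (((Polynomial.X : Polynomial ℂ) ^ m) ⊗ₜ[ℂ] x) := by
        rw [← Polynomial.C_mul_X_pow_eq_monomial, ← Polynomial.smul_eq_C_mul,
          TensorProduct.smul_tmul']
      simp only [LinearMap.zero_apply]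
      rw [hm, map_smul, KEY m x, smul_zero]
end

section
/- Let H be a Hopf algebra over ℂ[ℏ], g a Lie algebra mapped into H via a Lie algebra homomorphism ι with Δ(ι(x)) = ι(x)⊗1 + 1⊗ι(x), and let J: g → H satisfy Δ(J(x)) = J(x)⊗1 + 1⊗J(x) + (ℏ/2)[ι(x)⊗1, Ω_ι], where Ω_ι = (ι⊗ι)(Ω) for an invariant symmetric tensor Ω ∈ g⊗g. If m denotes multiplication in H and S the antipode, then S(J(x)) = −J(x) − (ℏ/2)·m([Ω_ι, ι(x)⊗1]). -/
open TensorProduct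

attribute [local instance 100] LieRing.ofAssociativeRing

section aux
variable {R A : Type*} [CommRing R] [Ring A] [HopfAlgebra R A]

lemma antipode_one' : HopfAlgebra.antipode (R := R) (1 : A) = 1 := by
  have key := HopfAlgebra.mul_antipode_rTensor_comul_apply (R := R) (1 : A)
  rw [Bialgebra.comul_one, Bialgebra.counit_one, Algebra.TensorProduct.one_def] at key
  simpa using key

lemma prim_antipode (a : A)
    (h1 : Coalgebra.comul (R := R) a = a ⊗ₜ[R] 1 + 1 ⊗ₜ[R] a)
    (h2 : Coalgebra.counit (R := R) a = 0) :
    HopfAlgebra.antipode (R := R) a = -a := by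
  have key := HopfAlgebra.mul_antipode_rTensor_comul_apply (R := R) a
  rw [h1, h2, map_add, map_add] at key
  simp only [LinearMap.rTensor_tmul, LinearMap.mul'_apply, antipode_one',
    map_zero, mul_one, one_mul] at key
  exact eq_neg_of_add_eq_zero_left key
end aux

section aux2
variable {H g : Type} [Ring H] [HopfAlgebra (Polynomial ℂ) H]
    [LieRing g] [LieAlgebra (Polynomial ℂ) g]

lemma lemA (ι : g →ₗ⁅Polynomial ℂ⁆ H)
    (hι : ∀ x : g, Coalgebra.comul (R := Polynomial ℂ) (ι x)
      = (ι x) ⊗ₜ[Polynomial ℂ] (1 : H) + (1 : H) ⊗ₜ[Polynomial ℂ] (ι x))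
    (hει : ∀ x : g, Coalgebra.counit (R := Polynomial ℂ) (ι x) = 0)
    (x : g) (Ω : g ⊗[Polynomial ℂ] g) :
    (HopfAlgebra.antipode (R := Polynomial ℂ) (A := H)).rTensor H
        ⁅(ι x) ⊗ₜ[Polynomial ℂ] (1 : H), TensorProduct.map ι.toLinearMap ι.toLinearMap Ω⁆
      = ⁅TensorProduct.map ι.toLinearMap ι.toLinearMap Ω, (ι x) ⊗ₜ[Polynomial ℂ] (1 : H)⁆ := by
  induction Ω using TensorProduct.induction_on with
  | zero => simp
  | tmul u v =>
      simp only [TensorProduct.map_tmul, Ring.lie_def, Algebra.TensorProduct.tmul_mul_tmul,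
        one_mul, mul_one, LieHom.coe_toLinearMap, map_sub, LinearMap.rTensor_tmul,
        ← TensorProduct.sub_tmul]
      congr 1
      have hb : ι ⁅x, u⁆ = ι x * ι u - ι u * ι x := by rw [LieHom.map_lie, Ring.lie_def]
      have hp := prim_antipode (R := Polynomial ℂ) (ι ⁅x, u⁆) (hι _) (hει _)
      rw [hb, map_sub] at hp
      rw [hp, neg_sub]
  | add a b ha hb =>
      rw [map_add, lie_add, map_add, ha, hb, add_lie]
end aux2

/-- Let `H` be a Hopf algebra over `ℂ[ℏ]`, `ι : g → H` a Lie algebra homomorphism (into `H`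
with the commutator bracket) whose values are primitive, and `J : g → H` a linear map with
`Δ(J(x)) = J(x)⊗1 + 1⊗J(x) + (ℏ/2)[ι(x)⊗1, Ω_ι]`, where `Ω_ι = (ι⊗ι)(Ω)` for an invariant
symmetric tensor `Ω ∈ g ⊗ g`, and `ε(ι(x)) = ε(J(x)) = 0`. Then the antipode satisfies
`S(J(x)) = −J(x) − (ℏ/2)·m([Ω_ι, ι(x)⊗1])`. -/
theorem stmt13 {H g : Type} [Ring H] [HopfAlgebra (Polynomial ℂ) H]
    [LieRing g] [LieAlgebra (Polynomial ℂ) g]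
    (ι : g →ₗ⁅Polynomial ℂ⁆ H) (J : g →ₗ[Polynomial ℂ] H)
    (Ω : g ⊗[Polynomial ℂ] g)
    (hinv : ∀ x : g,
      TensorProduct.map (LieAlgebra.ad (Polynomial ℂ) g x) LinearMap.id Ω
        + TensorProduct.map LinearMap.id (LieAlgebra.ad (Polynomial ℂ) g x) Ω = 0)
    (hsym : TensorProduct.comm (Polynomial ℂ) g g Ω = Ω)
    (hι : ∀ x : g, Coalgebra.comul (R := Polynomial ℂ) (ι x)
      = (ι x) ⊗ₜ[Polynomial ℂ] (1 : H) + (1 : H) ⊗ₜ[Polynomial ℂ] (ι x))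
    (hει : ∀ x : g, Coalgebra.counit (R := Polynomial ℂ) (ι x) = 0)
    (hεJ : ∀ x : g, Coalgebra.counit (R := Polynomial ℂ) (J x) = 0)
    (hJ : ∀ x : g, Coalgebra.comul (R := Polynomial ℂ) (J x)
      = (J x) ⊗ₜ[Polynomial ℂ] (1 : H) + (1 : H) ⊗ₜ[Polynomial ℂ] (J x)
        + (Polynomial.C (1/2 : ℂ) * Polynomial.X : Polynomial ℂ) •
            ⁅(ι x) ⊗ₜ[Polynomial ℂ] (1 : H),
              TensorProduct.map ι.toLinearMap ι.toLinearMap Ω⁆) :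
    ∀ x : g, HopfAlgebra.antipode (R := Polynomial ℂ) (J x)
      = -(J x) - (Polynomial.C (1/2 : ℂ) * Polynomial.X : Polynomial ℂ) •
          (LinearMap.mul' (Polynomial ℂ) H)
            ⁅TensorProduct.map ι.toLinearMap ι.toLinearMap Ω,
              (ι x) ⊗ₜ[Polynomial ℂ] (1 : H)⁆ := by
  intro x
  have key := HopfAlgebra.mul_antipode_rTensor_comul_apply (R := Polynomial ℂ) (J x)
  rw [hJ x, hεJ x, map_add, map_add, map_smul, map_add, map_add, map_smul,
    lemA ι hι hει x Ω] at key
  simp only [LinearMap.rTensor_tmul, LinearMap.mul'_apply, antipode_one',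
    map_zero, mul_one, one_mul] at key
  rw [add_assoc] at key
  rw [eq_neg_of_add_eq_zero_left key, neg_add, sub_eq_add_neg]
end

section
/- In the setting of the previous statement (associative algebra A with sl2 elements e, f, h and adjoint-intertwining elements Je, Jf, Jh), the following identity holds: [Je·f + Jf·e, f·e] = (Jf·e − f·Je)·h. -/
/-- Let `A` be an associative `ℂ`-algebra containing `e, f, h` satisfying the `sl₂`
commutator relations, and `Je, Jf, Jh ∈ A` intertwining the adjoint action. Then
`[Je·f + Jf·e, f·e] = (Jf·e − f·Je)·h`. -/
theorem stmt16 {A : Type} [Ring A] [Algebra ℂ A]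
    (e f h Je Jf Jh : A)
    (hhe : ⁅h, e⁆ = (2 : ℂ) • e) (hhf : ⁅h, f⁆ = (-2 : ℂ) • f) (hef : ⁅e, f⁆ = h)
    (h1 : ⁅h, Je⁆ = (2 : ℂ) • Je) (h2 : ⁅e, Jf⁆ = Jh) (h3 : ⁅f, Je⁆ = -Jh)
    (h4 : ⁅h, Jf⁆ = (-2 : ℂ) • Jf) (h7 : ⁅e, Je⁆ = 0) (h8 : ⁅f, Jf⁆ = 0) :
    ⁅Je * f + Jf * e, f * e⁆ = (Jf * e - f * Je) * h := by
  have h9 : ⁅f, Jh⁆ = (2:ℂ) • Jf := by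
    rw [← h2, (by simp only [Ring.lie_def]; noncomm_ring : ⁅f, ⁅e, Jf⁆⁆ = ⁅⁅f, e⁆, Jf⁆ + ⁅e, ⁅f, Jf⁆⁆), h8, (by simp only [Ring.lie_def]; noncomm_ring : ⁅e, (0:A)⁆ = 0), add_zero, (by simp only [Ring.lie_def]; noncomm_ring : ⁅f, e⁆ = -⁅e, f⁆), hef, (by simp only [Ring.lie_def]; noncomm_ring : ⁅-h, Jf⁆ = -⁅h, Jf⁆), h4]
    module
  have pef : e * f = f * e + h := by
    have := hef; rw [Ring.lie_def, sub_eq_iff_eq_add] at this; rw [this]; abel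
  have phe : h * e = e * h + (2:ℂ) • e := by
    have := hhe; rw [Ring.lie_def, sub_eq_iff_eq_add] at this; rw [this]; abel
  have peJe : e * Je = Je * e := by
    have := h7; rw [Ring.lie_def, sub_eq_zero] at this; exact this
  have peJf : e * Jf = Jf * e + Jh := by
    have := h2; rw [Ring.lie_def, sub_eq_iff_eq_add] at this; rw [this]; abel
  have pfJe : f * Je = Je * f - Jh := by
    have := h3; rw [Ring.lie_def, sub_eq_iff_eq_add] at this
    rw [this]; abel
  have pfJf : f * Jf = Jf * f := by
    have := h8; rw [Ring.lie_def, sub_eq_zero] at this; exact this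
  have pfJh : f * Jh = Jh * f + (2:ℂ) • Jf := by
    have := h9; rw [Ring.lie_def, sub_eq_iff_eq_add] at this; rw [this]; abel
  have pef' : ∀ x : A, e * (f * x) = f * (e * x) + h * x := fun x => by
    rw [← mul_assoc, pef]; noncomm_ring
  have phe' : ∀ x : A, h * (e * x) = e * (h * x) + (2:ℂ) • (e * x) := fun x => by
    rw [← mul_assoc, phe]; noncomm_ring [smul_mul_assoc]
  have peJe' : ∀ x : A, e * (Je * x) = Je * (e * x) := fun x => by
    rw [← mul_assoc, peJe, mul_assoc]
  have peJf' : ∀ x : A, e * (Jf * x) = Jf * (e * x) + Jh * x := fun x => by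
    rw [← mul_assoc, peJf]; noncomm_ring
  have pfJe' : ∀ x : A, f * (Je * x) = Je * (f * x) - Jh * x := fun x => by
    rw [← mul_assoc, pfJe]; noncomm_ring
  have pfJf' : ∀ x : A, f * (Jf * x) = Jf * (f * x) := fun x => by
    rw [← mul_assoc, pfJf, mul_assoc]
  have pfJh' : ∀ x : A, f * (Jh * x) = Jh * (f * x) + (2:ℂ) • (Jf * x) := fun x => by
    rw [← mul_assoc, pfJh]; noncomm_ring [smul_mul_assoc]
  rw [Ring.lie_def]
  simp only [mul_add, add_mul, sub_mul, mul_sub, mul_assoc, smul_mul_assoc,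
    mul_smul_comm, pef, phe, peJe, peJf, pfJe, pfJf, pfJh,
    pef', phe', peJe', peJf', pfJe', pfJf', pfJh']
  abel
end
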